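/- Let V₁, V₂ be Hilbert spaces and a : V₁ × V₂ → ℝ a bounded bilinear form that is nondegenerate (a(v₁,·) = 0 implies v₁ = 0) and satisfies the inf-sup condition inf_{‖v₂‖₂=1} sup_{‖v₁‖₁=1} a(v₁, v₂) = m_a > 0. Then the transposed inf-sup constant equals m_a as well: inf_{‖v₁‖₁=1} sup_{‖v₂‖₂=1} a(v₁, v₂) = m_a. -/

import Mathlib

open RealInnerProductSpace

/-- Sup of `⟪w, v⟫` over the unit sphere is `‖w‖` (nontrivial space). -/
lemma infsup_aux_sup {V : Type*} [NormedAddCommGroup V] [InnerProductSpace ℝ V]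
    [Nontrivial V] (w : V) :
    IsGreatest {y : ℝ | ∃ v : V, ‖v‖ = 1 ∧ y = ⟪w, v⟫} ‖w‖ := by
  constructor
  · by_cases hw : w = 0
    · obtain ⟨v, hv⟩ := exists_norm_eq V (zero_le_one)
      exact ⟨v, hv, by simp [hw]⟩
    · refine ⟨‖w‖⁻¹ • w, ?_, ?_⟩
      · simp [norm_smul, norm_ne_zero_iff.mpr hw, abs_of_nonneg (inv_nonneg.mpr (norm_nonneg w))]
      · rw [real_inner_smul_right, real_inner_self_eq_norm_mul_norm]
        field_simp
  · rintro y ⟨v, hv, rfl⟩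
    calc ⟪w, v⟫ ≤ ‖w‖ * ‖v‖ := real_inner_le_norm w v
    _ = ‖w‖ := by rw [hv, mul_one]

/-- If `c` is a lower bound for `‖A v₁‖` on the unit sphere and `A` has a right
inverse, with `T` the transposed map, then `c` is a lower bound for `‖T v₂‖`. -/
lemma infsup_aux_transfer {V₁ V₂ : Type*}
    [NormedAddCommGroup V₁] [InnerProductSpace ℝ V₁]
    [NormedAddCommGroup V₂] [InnerProductSpace ℝ V₂]
    (A : V₁ →L[ℝ] V₂) (T : V₂ → V₁) (S : V₂ → V₁)
    (hAT : ∀ (v₁ : V₁) (v₂ : V₂), ⟪A v₁, v₂⟫ = ⟪T v₂, v₁⟫)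
    (hAS : ∀ w : V₂, A (S w) = w)
    (c : ℝ) (hc : ∀ v₁ : V₁, ‖v₁‖ = 1 → c ≤ ‖A v₁‖) :
    ∀ v₂ : V₂, ‖v₂‖ = 1 → c ≤ ‖T v₂‖ := by
  intro v₂ h2
  have hS0 : S v₂ ≠ 0 := by
    intro h
    have : A (S v₂) = v₂ := hAS v₂
    rw [h, map_zero] at this
    rw [← this, norm_zero] at h2; norm_num at h2
  have hr : (0:ℝ) < ‖S v₂‖ := norm_pos_iff.mpr hS0
  have h1 : c ≤ ‖A (‖S v₂‖⁻¹ • S v₂)‖ := by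
    apply hc
    simp [norm_smul, abs_of_nonneg (inv_nonneg.mpr (norm_nonneg _)), inv_mul_cancel₀ hr.ne']
  have h2' : ‖A (‖S v₂‖⁻¹ • S v₂)‖ = ‖S v₂‖⁻¹ := by
    rw [map_smul, norm_smul, hAS, h2]
    simp [abs_of_nonneg (inv_nonneg.mpr (norm_nonneg _))]
  have h3 : ‖S v₂‖⁻¹ = ⟪T v₂, ‖S v₂‖⁻¹ • S v₂⟫ := by
    rw [real_inner_smul_right, ← hAT, hAS, real_inner_self_eq_norm_mul_norm, h2]
    ring
  calc c ≤ ‖S v₂‖⁻¹ := h2' ▸ h1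
  _ = ⟪T v₂, ‖S v₂‖⁻¹ • S v₂⟫ := h3
  _ ≤ ‖T v₂‖ * ‖‖S v₂‖⁻¹ • S v₂‖ := real_inner_le_norm _ _
  _ ≤ ‖T v₂‖ * 1 := by
      gcongr
      simp [norm_smul, abs_of_nonneg (inv_nonneg.mpr (norm_nonneg _)), inv_mul_cancel₀ hr.ne']
  _ = ‖T v₂‖ := mul_one _

set_option maxHeartbeats 1600000

/-- Inf-sup duality (Babuška): for a bounded, nondegenerate bilinear form
`a : V₁ × V₂ → ℝ` on Hilbert spaces with inf-sup constant
`ma = inf_{‖v₂‖=1} sup_{‖v₁‖=1} a v₁ v₂ > 0`, the transposed inf-sup constant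
`inf_{‖v₁‖=1} sup_{‖v₂‖=1} a v₁ v₂` equals `ma` as well. -/
theorem stmt4 {V₁ V₂ : Type*}
    [NormedAddCommGroup V₁] [InnerProductSpace ℝ V₁] [CompleteSpace V₁]
    [NormedAddCommGroup V₂] [InnerProductSpace ℝ V₂] [CompleteSpace V₂]
    (a : V₁ →ₗ[ℝ] V₂ →ₗ[ℝ] ℝ) (Ma ma : ℝ)
    (hcont : ∀ (v₁ : V₁) (v₂ : V₂), |a v₁ v₂| ≤ Ma * ‖v₁‖ * ‖v₂‖)
    (hnd : ∀ v₁ : V₁, (∀ v₂ : V₂, a v₁ v₂ = 0) → v₁ = 0)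
    (hma : 0 < ma)
    (hinfsup : IsGLB {x : ℝ | ∃ v₂ : V₂, ‖v₂‖ = 1 ∧
        x = sSup {y : ℝ | ∃ v₁ : V₁, ‖v₁‖ = 1 ∧ y = a v₁ v₂}} ma) :
    IsGLB {x : ℝ | ∃ v₁ : V₁, ‖v₁‖ = 1 ∧
        x = sSup {y : ℝ | ∃ v₂ : V₂, ‖v₂‖ = 1 ∧ y = a v₁ v₂}} ma := by
  -- V₂ is nontrivial, else the hypothesis set is empty and `IsGLB ∅ ma` is absurd
  rcases subsingleton_or_nontrivial V₂ with hV₂ | hV₂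
  · exfalso
    have h1 : (ma + 1) ∈ lowerBounds {x : ℝ | ∃ v₂ : V₂, ‖v₂‖ = 1 ∧
        x = sSup {y : ℝ | ∃ v₁ : V₁, ‖v₁‖ = 1 ∧ y = a v₁ v₂}} := by
      rintro x ⟨v₂, hv₂, -⟩
      exact absurd hv₂ (by simp [Subsingleton.elim v₂ 0])
    linarith [hinfsup.2 h1]
  -- V₁ is nontrivial, else every inner sup is `sSup ∅ = 0 < ma`
  rcases subsingleton_or_nontrivial V₁ with hV₁ | hV₁
  · exfalso
    obtain ⟨v₂, hv₂⟩ := exists_norm_eq V₂ (zero_le_one (α := ℝ))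
    have h0 : (0:ℝ) ∈ {x : ℝ | ∃ v₂ : V₂, ‖v₂‖ = 1 ∧
        x = sSup {y : ℝ | ∃ v₁ : V₁, ‖v₁‖ = 1 ∧ y = a v₁ v₂}} := by
      refine ⟨v₂, hv₂, ?_⟩
      have : {y : ℝ | ∃ v₁ : V₁, ‖v₁‖ = 1 ∧ y = a v₁ v₂} = ∅ := by
        ext y
        simp only [Set.mem_setOf_eq, Set.mem_empty_iff_false, iff_false, not_exists]
        rintro v₁ ⟨hv₁, -⟩
        exact absurd hv₁ (by simp [Subsingleton.elim v₁ 0])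
      rw [this, Real.sSup_empty]
    linarith [hinfsup.1 h0]
  -- the bilinear form as a continuous bilinear map
  let B : V₁ →L[ℝ] V₂ →L[ℝ] ℝ :=
    LinearMap.mkContinuous₂ a Ma (fun v₁ v₂ => by
      simpa [Real.norm_eq_abs] using hcont v₁ v₂)
  have hB : ∀ (v₁ : V₁) (v₂ : V₂), B v₁ v₂ = a v₁ v₂ := fun _ _ => rfl
  -- the operator A : V₁ →L V₂ with ⟪A v₁, v₂⟫ = a v₁ v₂
  let Aₗ : V₁ →ₗ[ℝ] V₂ :=
    { toFun := fun v₁ => (InnerProductSpace.toDual ℝ V₂).symm (B v₁)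
      map_add' := by intro x y; simp
      map_smul' := by intro r x; simp }
  let A : V₁ →L[ℝ] V₂ := Aₗ.mkContinuous ‖B‖ (fun v₁ => by
    show ‖(InnerProductSpace.toDual ℝ V₂).symm (B v₁)‖ ≤ _
    rw [LinearIsometryEquiv.norm_map]
    exact B.le_opNorm v₁)
  have keyA : ∀ (v₁ : V₁) (v₂ : V₂), ⟪A v₁, v₂⟫ = a v₁ v₂ := by
    intro v₁ v₂
    show ⟪(InnerProductSpace.toDual ℝ V₂).symm (B v₁), v₂⟫ = _
    rw [InnerProductSpace.toDual_symm_apply]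
    exact hB v₁ v₂
  -- the transposed operator T : V₂ →L V₁ with ⟪T v₂, v₁⟫ = a v₁ v₂
  let Tₗ : V₂ →ₗ[ℝ] V₁ :=
    { toFun := fun v₂ => (InnerProductSpace.toDual ℝ V₁).symm (B.flip v₂)
      map_add' := by intro x y; simp
      map_smul' := by intro r x; simp }
  let T : V₂ →L[ℝ] V₁ := Tₗ.mkContinuous ‖B.flip‖ (fun v₂ => by
    show ‖(InnerProductSpace.toDual ℝ V₁).symm (B.flip v₂)‖ ≤ _
    rw [LinearIsometryEquiv.norm_map]
    exact B.flip.le_opNorm v₂)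
  have keyT : ∀ (v₁ : V₁) (v₂ : V₂), ⟪T v₂, v₁⟫ = a v₁ v₂ := by
    intro v₁ v₂
    show ⟪(InnerProductSpace.toDual ℝ V₁).symm (B.flip v₂), v₁⟫ = _
    rw [InnerProductSpace.toDual_symm_apply]
    exact hB v₁ v₂
  clear_value A T
  -- the inner sups are norms
  have supA : ∀ v₁ : V₁, sSup {y : ℝ | ∃ v₂ : V₂, ‖v₂‖ = 1 ∧ y = a v₁ v₂} = ‖A v₁‖ := by
    intro v₁
    have hset : {y : ℝ | ∃ v₂ : V₂, ‖v₂‖ = 1 ∧ y = a v₁ v₂} =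
        {y : ℝ | ∃ v : V₂, ‖v‖ = 1 ∧ y = ⟪A v₁, v⟫} := by
      ext y; simp only [Set.mem_setOf_eq, keyA]
    rw [hset]
    exact (infsup_aux_sup (A v₁)).csSup_eq
  have supT : ∀ v₂ : V₂, sSup {y : ℝ | ∃ v₁ : V₁, ‖v₁‖ = 1 ∧ y = a v₁ v₂} = ‖T v₂‖ := by
    intro v₂
    have hset : {y : ℝ | ∃ v₁ : V₁, ‖v₁‖ = 1 ∧ y = a v₁ v₂} =
        {y : ℝ | ∃ v : V₁, ‖v‖ = 1 ∧ y = ⟪T v₂, v⟫} := by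
      ext y; simp only [Set.mem_setOf_eq, keyT]
    rw [hset]
    exact (infsup_aux_sup (T v₂)).csSup_eq
  -- lower bound on T from the hypothesis
  have hlowT : ∀ v₂ : V₂, ‖v₂‖ = 1 → ma ≤ ‖T v₂‖ := by
    intro v₂ hv₂
    have := hinfsup.1 ⟨v₂, hv₂, rfl⟩
    rwa [supT v₂] at this
  have hlowT' : ∀ v₂ : V₂, ma * ‖v₂‖ ≤ ‖T v₂‖ := by
    intro v₂
    by_cases hv : v₂ = 0
    · simp [hv]
    · have hn : (0:ℝ) < ‖v₂‖ := norm_pos_iff.mpr hv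
      have := hlowT (‖v₂‖⁻¹ • v₂) (by
        simp [norm_smul, abs_of_nonneg (inv_nonneg.mpr (norm_nonneg _)),
          inv_mul_cancel₀ hn.ne'])
      rw [map_smul, norm_smul] at this
      simp only [norm_inv, norm_norm] at this
      rw [inv_mul_eq_div, le_div_iff₀ hn] at this
      linarith
  -- T is injective with closed range
  have hanti : AntilipschitzWith (Real.toNNReal ma⁻¹) T := by
    apply T.antilipschitz_of_bound
    intro x
    rw [Real.coe_toNNReal _ (inv_nonneg.mpr hma.le)]
    rw [inv_mul_eq_div, le_div_iff₀ hma]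
    calc ‖x‖ * ma = ma * ‖x‖ := mul_comm _ _
    _ ≤ ‖T x‖ := hlowT' x
  have hker : T.ker = ⊥ := (LinearMap.ker_eq_bot (f := (T : V₂ →ₗ[ℝ] V₁))).mpr hanti.injective
  have hclosed : IsClosed (Set.range T) := hanti.isClosed_range T.uniformContinuous
  have hclosed' : IsClosed ((LinearMap.range (T : V₂ →ₗ[ℝ] V₁) : Submodule ℝ V₁) : Set V₁) := by
    rwa [LinearMap.coe_range]
  haveI : CompleteSpace (LinearMap.range (T : V₂ →ₗ[ℝ] V₁) : Submodule ℝ V₁) := hclosed'.completeSpace_coe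
  have hrange : LinearMap.range (T : V₂ →ₗ[ℝ] V₁) = ⊤ := by
    rw [← Submodule.orthogonal_eq_bot_iff]
    rw [Submodule.eq_bot_iff]
    intro v₁ hv₁
    apply hnd
    intro v₂
    rw [← keyT]
    exact hv₁ (T v₂) (LinearMap.mem_range_self _ v₂)
  -- the continuous linear equivalence given by T, and the inverse of A
  let E : V₂ ≃L[ℝ] V₁ := ContinuousLinearEquiv.ofBijective T hker hrange
  have hE : ∀ v₂ : V₂, E v₂ = T v₂ := fun v₂ => by
    exact congrFun (ContinuousLinearEquiv.coeFn_ofBijective T hker hrange) v₂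
  clear_value E
  let S : V₂ →L[ℝ] V₁ := ContinuousLinearMap.adjoint (E.symm : V₁ →L[ℝ] V₂)
  have hAS : ∀ w : V₂, A (S w) = w := by
    intro w
    apply ext_inner_right ℝ
    intro v₂
    rw [keyA, ← keyT, real_inner_comm]
    have : ⟪S w, T v₂⟫ = ⟪w, (E.symm : V₁ →L[ℝ] V₂) (T v₂)⟫ :=
      ContinuousLinearMap.adjoint_inner_left (E.symm : V₁ →L[ℝ] V₂) (T v₂) w
    rw [this]
    have : (E.symm : V₁ →L[ℝ] V₂) (T v₂) = v₂ := by
      show E.symm (T v₂) = v₂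
      rw [← hE, ContinuousLinearEquiv.symm_apply_apply]
    rw [this]
  have hTS : ∀ u : V₁, T (E.symm u) = u := by
    intro u
    rw [← hE, ContinuousLinearEquiv.apply_symm_apply]
  -- transposed duality relation
  have keyAT : ∀ (v₁ : V₁) (v₂ : V₂), ⟪A v₁, v₂⟫ = ⟪T v₂, v₁⟫ := by
    intro v₁ v₂; rw [keyA, keyT]
  have keyTA : ∀ (v₂ : V₂) (v₁ : V₁), ⟪T v₂, v₁⟫ = ⟪A v₁, v₂⟫ := by
    intro v₂ v₁; rw [keyA, keyT]
  -- conclude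
  constructor
  · rintro x ⟨v₁, hv₁, rfl⟩
    rw [supA v₁]
    exact infsup_aux_transfer T A (fun u => E.symm u) keyTA hTS ma hlowT v₁ hv₁
  · intro c hc
    have hc' : ∀ v₁ : V₁, ‖v₁‖ = 1 → c ≤ ‖A v₁‖ := by
      intro v₁ hv₁
      have := hc ⟨v₁, hv₁, rfl⟩
      rwa [supA v₁] at this
    have hcT : ∀ v₂ : V₂, ‖v₂‖ = 1 → c ≤ ‖T v₂‖ :=
      infsup_aux_transfer A T S keyAT hAS c hc'
    apply hinfsup.2
    rintro x ⟨v₂, hv₂, rfl⟩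
    rw [supT v₂]
    exact hcT v₂ hv₂
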